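/- In the non-3-colorability reduction task, for every state s with s[M] = 1, the sum over edge-features evaluates as follows: Σ_{{u,v}∈E} Σ_{c≠c'} (−1)·[s ⊨ {(M,1),(C_u,c),(C_v,c')}] = −|{{u,v} ∈ E : s[C_u] ≠ s[C_v]}| ≥ −|E|, with equality to −|E| iff s encodes a proper 3-coloring; hence φ(s) = (|E|−1) − |{properly colored edges under s}|. -/

import Mathlib

attribute [local instance] Classical.propDecidable

/-- The potential heuristic of the non-3-colorability reduction task for the graph with
vertex set `Vtx` and edge set `E`. States are pairs of a coloring and the value of the
master variable `M`. The feature `(M,1)` has weight `|E| − 1`; each size-3 feature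
`{(M,1),(C_u,c),(C_v,c')}` with `{u,v} ∈ E` and `c ≠ c'` has weight `−1`;
all other features have weight `0`. -/
noncomputable def phiRed {Vtx : Type} [Fintype Vtx] [DecidableEq Vtx]
    (E : Finset (Vtx × Vtx)) (s : (Vtx → Fin 3) × Bool) : ℝ :=
  (if s.2 = true then ((E.card : ℝ) - 1) else 0) +
    ∑ e ∈ E, ∑ c : Fin 3, ∑ c' : Fin 3,
      if c ≠ c' ∧ s.2 = true ∧ s.1 e.1 = c ∧ s.1 e.2 = c' then (-1 : ℝ) else 0


lemma innerSum14 (a b : Fin 3) :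
    (∑ c : Fin 3, ∑ c' : Fin 3,
      if c ≠ c' ∧ a = c ∧ b = c' then (-1 : ℝ) else 0) =
    if a ≠ b then (-1 : ℝ) else 0 := by
  fin_cases a <;> fin_cases b <;> simp [Fin.sum_univ_three]

lemma mainSum14 {Vtx : Type} [Fintype Vtx] [DecidableEq Vtx]
    (E : Finset (Vtx × Vtx)) (κ : Vtx → Fin 3) :
    (∑ e ∈ E, ∑ c : Fin 3, ∑ c' : Fin 3,
        if c ≠ c' ∧ κ e.1 = c ∧ κ e.2 = c' then (-1 : ℝ) else 0) =
      -(((E.filter fun e => κ e.1 ≠ κ e.2).card : ℝ)) := by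
  have : ∀ e ∈ E, (∑ c : Fin 3, ∑ c' : Fin 3,
      if c ≠ c' ∧ κ e.1 = c ∧ κ e.2 = c' then (-1 : ℝ) else 0)
      = if κ e.1 ≠ κ e.2 then (-1 : ℝ) else 0 := fun e _ => innerSum14 _ _
  rw [Finset.sum_congr rfl this, Finset.sum_ite, Finset.sum_const, Finset.sum_const]
  simp

/-- In the reduction task, for every state with `s[M] = 1` and coloring `κ`, the sum over
the edge-features equals minus the number of properly colored edges; it is at least
`−|E|`, with equality iff `κ` is a proper 3-coloring; and hence
`φ(s) = (|E| − 1) − |{properly colored edges}|`. -/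
theorem stmt14 {Vtx : Type} [Fintype Vtx] [DecidableEq Vtx]
    (E : Finset (Vtx × Vtx)) (hE : ∀ e ∈ E, e.1 ≠ e.2) (κ : Vtx → Fin 3) :
    (∑ e ∈ E, ∑ c : Fin 3, ∑ c' : Fin 3,
        if c ≠ c' ∧ κ e.1 = c ∧ κ e.2 = c' then (-1 : ℝ) else 0) =
      -(((E.filter fun e => κ e.1 ≠ κ e.2).card : ℝ)) ∧
    -((E.card : ℝ)) ≤
      -(((E.filter fun e => κ e.1 ≠ κ e.2).card : ℝ)) ∧
    (-(((E.filter fun e => κ e.1 ≠ κ e.2).card : ℝ)) = -((E.card : ℝ)) ↔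
      ∀ e ∈ E, κ e.1 ≠ κ e.2) ∧
    phiRed E (κ, true) =
      ((E.card : ℝ) - 1) - ((E.filter fun e => κ e.1 ≠ κ e.2).card : ℝ) := by
  have hsub : (E.filter fun e => κ e.1 ≠ κ e.2) ⊆ E := Finset.filter_subset _ _
  have hcard : (E.filter fun e => κ e.1 ≠ κ e.2).card ≤ E.card := Finset.card_le_card hsub
  refine ⟨mainSum14 E κ, ?_, ?_, ?_⟩
  · simp [neg_le_neg_iff]; exact_mod_cast hcard
  · rw [neg_inj, Nat.cast_inj]
    constructor
    · intro h e he
      have hEq := Finset.eq_of_subset_of_card_le hsub (le_of_eq h.symm)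
      rw [← hEq] at he
      exact (Finset.mem_filter.mp he).2
    · intro h
      congr 1
      exact Finset.filter_true_of_mem h
  · simp only [phiRed]
    norm_num
    rw [mainSum14]
    ring
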